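/- Let B(v) be a branch with roots r₁, r₂ and leaf v, and let G be obtained from B(v) by adding a new vertex q and the three edges (q, v), (q, r₁), (q, r₂). Then G is 3-connected. -/
import Mathlib


/-- A *branch* `B(v)`: a graph built from the `K₂` on roots `r₁, r₂` by a
sequence of extensions, in which every non-root vertex has exactly two distinct
parents added strictly earlier (witnessed by `rank`), the leaf `lf = v` is the
last added vertex (nobody's parent), and every non-root non-leaf vertex has at
least one child (so every vertex is an ancestor of the leaf). -/
structure Branch where
  verts : Finset ℕ
  r₁ : ℕ
  r₂ : ℕ
  lf : ℕ
  root_ne : r₁ ≠ r₂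
  r₁_mem : r₁ ∈ verts
  r₂_mem : r₂ ∈ verts
  leaf_mem : lf ∈ verts
  leaf_ne_r₁ : lf ≠ r₁
  leaf_ne_r₂ : lf ≠ r₂
  p₁ : ℕ → ℕ
  p₂ : ℕ → ℕ
  rank : ℕ → ℕ
  parent₁_mem : ∀ x ∈ verts, x ≠ r₁ → x ≠ r₂ → p₁ x ∈ verts
  parent₂_mem : ∀ x ∈ verts, x ≠ r₁ → x ≠ r₂ → p₂ x ∈ verts
  parents_ne : ∀ x ∈ verts, x ≠ r₁ → x ≠ r₂ → p₁ x ≠ p₂ x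
  rank_lt₁ : ∀ x ∈ verts, x ≠ r₁ → x ≠ r₂ → rank (p₁ x) < rank x
  rank_lt₂ : ∀ x ∈ verts, x ≠ r₁ → x ≠ r₂ → rank (p₂ x) < rank x
  leaf_no_child : ∀ x ∈ verts, x ≠ r₁ → x ≠ r₂ → p₁ x ≠ lf ∧ p₂ x ≠ lf
  has_child : ∀ x ∈ verts, x ≠ r₁ → x ≠ r₂ → x ≠ lf →
    ∃ c ∈ verts, c ≠ r₁ ∧ c ≠ r₂ ∧ (p₁ c = x ∨ p₂ c = x)

/-- The edge set of a branch: the root edge together with all parent-child edges. -/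
def Branch.edges (B : Branch) : Finset (Sym2 ℕ) :=
  insert s(B.r₁, B.r₂)
    ((B.verts.filter (fun x => x ≠ B.r₁ ∧ x ≠ B.r₂)).biUnion
      (fun x => {s(x, B.p₁ x), s(x, B.p₂ x)}))

/-- The branch viewed as a simple graph on `ℕ`. -/
def Branch.graph (B : Branch) : SimpleGraph ℕ :=
  SimpleGraph.fromEdgeSet (B.edges : Set (Sym2 ℕ))

/-- The vertex set of the graph `G` obtained from the branch `B` by adding a
new vertex `q`. -/
def extVerts (B : Branch) (q : ℕ) : Finset ℕ := insert q B.verts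

/-- The edge set of the graph `G` obtained from the branch `B` by adding a new
vertex `q` together with the three edges `(q,v)`, `(q,r₁)`, `(q,r₂)`. -/
def extEdges (B : Branch) (q : ℕ) : Finset (Sym2 ℕ) :=
  insert s(q, B.lf) (insert s(q, B.r₁) (insert s(q, B.r₂) B.edges))

/-- The extended graph as a simple graph on `ℕ`. -/
def extGraph (B : Branch) (q : ℕ) : SimpleGraph ℕ :=
  SimpleGraph.fromEdgeSet (extEdges B q : Set (Sym2 ℕ))

open SimpleGraph

section Aux

lemma Branch.edge_p₁ (B : Branch) {x : ℕ} (hx : x ∈ B.verts) (h1 : x ≠ B.r₁) (h2 : x ≠ B.r₂) :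
    s(x, B.p₁ x) ∈ B.edges := by
  apply Finset.mem_insert_of_mem
  exact Finset.mem_biUnion.2 ⟨x, by simp [hx, h1, h2], by simp⟩

lemma Branch.edge_p₂ (B : Branch) {x : ℕ} (hx : x ∈ B.verts) (h1 : x ≠ B.r₁) (h2 : x ≠ B.r₂) :
    s(x, B.p₂ x) ∈ B.edges := by
  apply Finset.mem_insert_of_mem
  exact Finset.mem_biUnion.2 ⟨x, by simp [hx, h1, h2], by simp⟩

lemma edges_sub (B : Branch) (q : ℕ) : B.edges ⊆ extEdges B q := fun e he =>
  Finset.mem_insert_of_mem (Finset.mem_insert_of_mem (Finset.mem_insert_of_mem he))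

lemma extAdj_iff (B : Branch) (q : ℕ) {a b : ℕ} :
    (extGraph B q).Adj a b ↔ s(a, b) ∈ extEdges B q ∧ a ≠ b := by
  simp [extGraph, SimpleGraph.fromEdgeSet_adj]

lemma adj_p₁ (B : Branch) (q : ℕ) {x : ℕ} (hx : x ∈ B.verts) (h1 : x ≠ B.r₁) (h2 : x ≠ B.r₂) :
    (extGraph B q).Adj x (B.p₁ x) := by
  rw [extAdj_iff]
  refine ⟨edges_sub B q (B.edge_p₁ hx h1 h2), fun h => ?_⟩
  have := B.rank_lt₁ x hx h1 h2
  rw [← h] at this; exact lt_irrefl _ this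

lemma adj_p₂ (B : Branch) (q : ℕ) {x : ℕ} (hx : x ∈ B.verts) (h1 : x ≠ B.r₁) (h2 : x ≠ B.r₂) :
    (extGraph B q).Adj x (B.p₂ x) := by
  rw [extAdj_iff]
  refine ⟨edges_sub B q (B.edge_p₂ hx h1 h2), fun h => ?_⟩
  have := B.rank_lt₂ x hx h1 h2
  rw [← h] at this; exact lt_irrefl _ this

lemma adj_roots (B : Branch) (q : ℕ) :
    (extGraph B q).Adj B.r₁ B.r₂ := by
  rw [extAdj_iff]
  exact ⟨edges_sub B q (Finset.mem_insert_self _ _), B.root_ne⟩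

lemma adj_roots' (B : Branch) (q : ℕ) {a b : ℕ} (ha : a = B.r₁ ∨ a = B.r₂)
    (hb : b = B.r₁ ∨ b = B.r₂) (hab : a ≠ b) : (extGraph B q).Adj a b := by
  rcases ha with rfl | rfl <;> rcases hb with rfl | rfl
  · exact absurd rfl hab
  · exact adj_roots B q
  · exact (adj_roots B q).symm
  · exact absurd rfl hab

lemma adj_q_lf (B : Branch) (q : ℕ) (hq : q ∉ B.verts) :
    (extGraph B q).Adj q B.lf := by
  rw [extAdj_iff]
  exact ⟨Finset.mem_insert_self _ _, fun h => hq (h ▸ B.leaf_mem)⟩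

lemma adj_q_r₁ (B : Branch) (q : ℕ) (hq : q ∉ B.verts) :
    (extGraph B q).Adj q B.r₁ := by
  rw [extAdj_iff]
  exact ⟨Finset.mem_insert_of_mem (Finset.mem_insert_self _ _), fun h => hq (h ▸ B.r₁_mem)⟩

lemma adj_q_r₂ (B : Branch) (q : ℕ) (hq : q ∉ B.verts) :
    (extGraph B q).Adj q B.r₂ := by
  rw [extAdj_iff]
  exact ⟨Finset.mem_insert_of_mem (Finset.mem_insert_of_mem (Finset.mem_insert_self _ _)),
    fun h => hq (h ▸ B.r₂_mem)⟩

/-- Ascend from any non-root vertex to the leaf, all support vertices having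
rank at least the rank of the start. -/
lemma ascend (B : Branch) (q : ℕ) (n : ℕ) : ∀ z ∈ B.verts, z ≠ B.r₁ → z ≠ B.r₂ →
    (B.verts.filter (fun u => B.rank z < B.rank u)).card ≤ n →
    ∃ w : (extGraph B q).Walk z B.lf, ∀ u ∈ w.support, B.rank z ≤ B.rank u := by
  induction n using Nat.strong_induction_on with
  | _ n ih =>
    intro z hz h1 h2 hn
    by_cases hzl : z = B.lf
    · subst hzl; exact ⟨Walk.nil, by simp⟩
    · obtain ⟨c, hc, hc1, hc2, hcp⟩ := B.has_child z hz h1 h2 hzl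
      have hrc : B.rank z < B.rank c := by
        rcases hcp with h | h
        · have := B.rank_lt₁ c hc hc1 hc2; rwa [h] at this
        · have := B.rank_lt₂ c hc hc1 hc2; rwa [h] at this
      have hadj : (extGraph B q).Adj z c := by
        rw [extAdj_iff]
        constructor
        · apply edges_sub
          rw [Sym2.eq_swap]
          rcases hcp with h | h
          · have := B.edge_p₁ hc hc1 hc2; rwa [h] at this
          · have := B.edge_p₂ hc hc1 hc2; rwa [h] at this
        · intro h; rw [h] at hrc; exact lt_irrefl _ hrc
      have hsub : (B.verts.filter (fun u => B.rank c < B.rank u)) ⊆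
          (B.verts.filter (fun u => B.rank z < B.rank u)).erase c := by
        intro u hu
        simp only [Finset.mem_filter] at hu
        refine Finset.mem_erase.2 ⟨fun h => ?_, Finset.mem_filter.2 ⟨hu.1, lt_trans hrc hu.2⟩⟩
        subst h; exact lt_irrefl _ hu.2
      have hclt : (B.verts.filter (fun u => B.rank c < B.rank u)).card <
          (B.verts.filter (fun u => B.rank z < B.rank u)).card :=
        lt_of_le_of_lt (Finset.card_le_card hsub)
          (Finset.card_erase_lt_of_mem (Finset.mem_filter.2 ⟨hc, hrc⟩))
      obtain ⟨w, hw⟩ := ih _ (lt_of_lt_of_le hclt hn) c hc hc1 hc2 le_rfl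
      refine ⟨Walk.cons hadj w, ?_⟩
      intro u hu
      rw [Walk.support_cons, List.mem_cons] at hu
      rcases hu with rfl | hu
      · exact le_rfl
      · exact le_of_lt (lt_of_lt_of_le hrc (hw u hu))

/-- Descend from any vertex avoiding `T`: either we reach a root outside `T`,
or we get stuck at a vertex both of whose parents lie in `T`. -/
lemma descend (B : Branch) (q : ℕ) (T : Set ℕ) (n : ℕ) :
    ∀ x ∈ B.verts, B.rank x ≤ n → x ∉ T →
    (∃ r, (r = B.r₁ ∨ r = B.r₂) ∧ r ∉ T ∧
      ∃ w : (extGraph B q).Walk x r, ∀ u ∈ w.support, u ∉ T) ∨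
    (∃ z ∈ B.verts, z ≠ B.r₁ ∧ z ≠ B.r₂ ∧ B.p₁ z ∈ T ∧ B.p₂ z ∈ T ∧
      ∃ w : (extGraph B q).Walk x z, ∀ u ∈ w.support, u ∉ T) := by
  induction n using Nat.strong_induction_on with
  | _ n ih =>
    intro x hx hn hxT
    by_cases h1 : x = B.r₁
    · exact Or.inl ⟨x, Or.inl h1, hxT, Walk.nil, by
        intro u hu; simp only [Walk.support_nil, List.mem_singleton] at hu; subst hu; exact hxT⟩
    by_cases h2 : x = B.r₂
    · exact Or.inl ⟨x, Or.inr h2, hxT, Walk.nil, by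
        intro u hu; simp only [Walk.support_nil, List.mem_singleton] at hu; subst hu; exact hxT⟩
    have step : ∀ p : ℕ, p ∈ B.verts → B.rank p < B.rank x → p ∉ T →
        (extGraph B q).Adj x p →
        (∃ r, (r = B.r₁ ∨ r = B.r₂) ∧ r ∉ T ∧
          ∃ w : (extGraph B q).Walk x r, ∀ u ∈ w.support, u ∉ T) ∨
        (∃ z ∈ B.verts, z ≠ B.r₁ ∧ z ≠ B.r₂ ∧ B.p₁ z ∈ T ∧ B.p₂ z ∈ T ∧
          ∃ w : (extGraph B q).Walk x z, ∀ u ∈ w.support, u ∉ T) := by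
      intro p hpm hrlt hpT hadj
      rcases ih (B.rank p) (lt_of_lt_of_le hrlt hn) p hpm le_rfl hpT with
        ⟨r, hrr, hrT, w, hw⟩ | ⟨z, hzm, hz1, hz2, hzp1, hzp2, w, hw⟩
      · refine Or.inl ⟨r, hrr, hrT, Walk.cons hadj w, ?_⟩
        intro u hu; rw [Walk.support_cons, List.mem_cons] at hu
        rcases hu with rfl | hu; exact hxT; exact hw u hu
      · refine Or.inr ⟨z, hzm, hz1, hz2, hzp1, hzp2, Walk.cons hadj w, ?_⟩
        intro u hu; rw [Walk.support_cons, List.mem_cons] at hu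
        rcases hu with rfl | hu; exact hxT; exact hw u hu
    by_cases hp1 : B.p₁ x ∈ T
    · by_cases hp2 : B.p₂ x ∈ T
      · exact Or.inr ⟨x, hx, h1, h2, hp1, hp2, Walk.nil, by
          intro u hu; simp only [Walk.support_nil, List.mem_singleton] at hu; subst hu; exact hxT⟩
      · exact step _ (B.parent₂_mem x hx h1 h2) (B.rank_lt₂ x hx h1 h2) hp2
          (adj_p₂ B q hx h1 h2)
    · exact step _ (B.parent₁_mem x hx h1 h2) (B.rank_lt₁ x hx h1 h2) hp1
        (adj_p₁ B q hx h1 h2)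

end Aux

/-- the graph obtained from a branch `B(v)` (with at least 4
vertices) by adding a new vertex `q` adjacent to `v`, `r₁` and `r₂` is
3-connected: it has more than 3 vertices and removing any two vertices leaves
it connected. -/
theorem ext_graph_three_connected (B : Branch) (q : ℕ) (hq : q ∉ B.verts)
    (h4 : 4 ≤ B.verts.card) :
    3 < (extVerts B q).card ∧
    ∀ t₁ t₂ : ℕ, ∀ x ∈ extVerts B q, ∀ y ∈ extVerts B q,
      x ≠ t₁ → x ≠ t₂ → y ≠ t₁ → y ≠ t₂ →
        ∃ w : (extGraph B q).Walk x y, t₁ ∉ w.support ∧ t₂ ∉ w.support := by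
  constructor
  · rw [extVerts, Finset.card_insert_of_notMem hq]; omega
  intro t₁ t₂ x hx y hy hx1 hx2 hy1 hy2
  set T : Set ℕ := {t₁, t₂} with hTdef
  have memT : ∀ u : ℕ, u ∈ T ↔ u = t₁ ∨ u = t₂ := by
    intro u; simp [hTdef]
  have hq_ne : ∀ u ∈ B.verts, u ≠ q := fun u hu h => hq (h ▸ hu)
  -- a hub reachable from every surviving vertex
  have key : ∃ h, ∀ z ∈ extVerts B q, z ∉ T →
      ∃ w : (extGraph B q).Walk z h, ∀ u ∈ w.support, u ∉ T := by
    by_cases hqT : q ∈ T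
    · -- q is deleted; hub is a surviving root, no blocked vertices possible
      obtain ⟨h, hroot, hhT⟩ : ∃ h, (h = B.r₁ ∨ h = B.r₂) ∧ h ∉ T := by
        by_cases hr1 : B.r₁ ∈ T
        · refine ⟨B.r₂, Or.inr rfl, fun hr2 => ?_⟩
          rw [memT] at hqT hr1 hr2
          have e1 := hq_ne _ B.r₁_mem
          have e2 := hq_ne _ B.r₂_mem
          have e3 := B.root_ne
          omega
        · exact ⟨B.r₁, Or.inl rfl, hr1⟩
      refine ⟨h, fun z hz hzT => ?_⟩
      rcases Finset.mem_insert.1 hz with rfl | hzv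
      · exact absurd hqT hzT
      rcases descend B q T (B.rank z) z hzv le_rfl hzT with
        ⟨r, hrr, hrT, w, hw⟩ | ⟨z', hz'm, h1, h2, hp1, hp2, _, _⟩
      · by_cases hrh : r = h
        · subst hrh; exact ⟨w, hw⟩
        · refine ⟨w.append (Walk.cons (adj_roots' B q hrr hroot hrh) Walk.nil), ?_⟩
          intro u hu
          rw [Walk.mem_support_append_iff] at hu
          rcases hu with hu | hu
          · exact hw u hu
          · simp only [Walk.support_cons, Walk.support_nil, List.mem_cons,
              List.mem_singleton, List.not_mem_nil, or_false] at hu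
            rcases hu with rfl | rfl; exact hrT; exact hhT
      · exfalso
        rw [memT] at hqT hp1 hp2
        have e1 := hq_ne _ (B.parent₁_mem z' hz'm h1 h2)
        have e2 := hq_ne _ (B.parent₂_mem z' hz'm h1 h2)
        have e3 := B.parents_ne z' hz'm h1 h2
        omega
    · -- q survives; hub is q
      refine ⟨q, fun z hz hzT => ?_⟩
      rcases Finset.mem_insert.1 hz with rfl | hzv
      · exact ⟨Walk.nil, by
          intro u hu; simp only [Walk.support_nil, List.mem_singleton] at hu
          subst hu; exact hzT⟩
      rcases descend B q T (B.rank z) z hzv le_rfl hzT with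
        ⟨r, hrr, hrT, w, hw⟩ | ⟨z', hz'm, h1, h2, hp1, hp2, w, hw⟩
      · have hadj : (extGraph B q).Adj r q := by
          rcases hrr with rfl | rfl
          · exact (adj_q_r₁ B q hq).symm
          · exact (adj_q_r₂ B q hq).symm
        refine ⟨w.append (Walk.cons hadj Walk.nil), ?_⟩
        intro u hu
        rw [Walk.mem_support_append_iff] at hu
        rcases hu with hu | hu
        · exact hw u hu
        · simp only [Walk.support_cons, Walk.support_nil, List.mem_cons,
            List.mem_singleton, List.not_mem_nil, or_false] at hu
          rcases hu with rfl | rfl; exact hrT; exact hqT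
      · -- blocked at z'; T = {p₁ z', p₂ z'}; ascend to the leaf, then to q
        have hpne := B.parents_ne z' hz'm h1 h2
        have ht : ∀ u, u ∈ T → u = B.p₁ z' ∨ u = B.p₂ z' := by
          intro u hu
          rw [memT] at hu hp1 hp2
          omega
        obtain ⟨w2, hw2⟩ := ascend B q _ z' hz'm h1 h2 le_rfl
        have hw2T : ∀ u ∈ w2.support, u ∉ T := by
          intro u hu huT
          rcases ht u huT with rfl | rfl
          · exact absurd (hw2 _ hu) (not_le.2 (B.rank_lt₁ z' hz'm h1 h2))
          · exact absurd (hw2 _ hu) (not_le.2 (B.rank_lt₂ z' hz'm h1 h2))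
        have hlfT : B.lf ∉ T := by
          intro hT
          rcases ht _ hT with e | e
          · exact (B.leaf_no_child z' hz'm h1 h2).1 e.symm
          · exact (B.leaf_no_child z' hz'm h1 h2).2 e.symm
        refine ⟨w.append (w2.append (Walk.cons (adj_q_lf B q hq).symm Walk.nil)), ?_⟩
        intro u hu
        rw [Walk.mem_support_append_iff, Walk.mem_support_append_iff] at hu
        rcases hu with hu | hu | hu
        · exact hw u hu
        · exact hw2T u hu
        · simp only [Walk.support_cons, Walk.support_nil, List.mem_cons,
            List.mem_singleton, List.not_mem_nil, or_false] at hu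
          rcases hu with rfl | rfl; exact hlfT; exact hqT
  obtain ⟨h, key⟩ := key
  have hxT : x ∉ T := by rw [memT]; tauto
  have hyT : y ∉ T := by rw [memT]; tauto
  obtain ⟨wx, hwx⟩ := key x hx hxT
  obtain ⟨wy, hwy⟩ := key y hy hyT
  refine ⟨wx.append wy.reverse, ?_, ?_⟩
  · intro hmem
    rw [Walk.mem_support_append_iff] at hmem
    rcases hmem with hm | hm
    · exact hwx _ hm (by rw [memT]; exact Or.inl rfl)
    · rw [Walk.support_reverse, List.mem_reverse] at hm
      exact hwy _ hm (by rw [memT]; exact Or.inl rfl)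
  · intro hmem
    rw [Walk.mem_support_append_iff] at hmem
    rcases hmem with hm | hm
    · exact hwx _ hm (by rw [memT]; exact Or.inr rfl)
    · rw [Walk.support_reverse, List.mem_reverse] at hm
      exact hwy _ hm (by rw [memT]; exact Or.inr rfl)
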